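/- arXiv:2511.05804 — 2 statements merged into one kernel-verified Lean document; each statement's English description precedes it below -/
import Mathlib

section
/- ℓ¹ stability of normalization: let a, b : Fin T → ℝ be nonnegative with A = Σ_k a_k > 0 and B = Σ_k b_k > 0. Then Σ_k |a_k/A − b_k/B| ≤ 2 · (Σ_k |a_k − b_k|) / max(A, B). -/
open scoped BigOperators

lemma norm_l1_aux {T : ℕ}
    (a b : Fin T → ℝ) (hb : ∀ k, 0 ≤ b k)
    (hA : 0 < ∑ k, a k) (hB : 0 < ∑ k, b k) (hBA : (∑ k, b k) ≤ ∑ k, a k) :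
    ∑ k, |a k / (∑ j, a j) - b k / (∑ j, b j)| ≤
      2 * (∑ k, |a k - b k|) / (∑ k, a k) := by
  set A := ∑ k, a k with hAdef
  set B := ∑ k, b k with hBdef
  have hABpos : 0 < A * B := mul_pos hA hB
  have step1 : ∀ k, |a k / A - b k / B| ≤ |a k - b k| / A + b k * ((A - B) / (A * B)) := by
    intro k
    have heq : a k / A - b k / B = (a k - b k) / A - b k * ((A - B) / (A * B)) := by
      field_simp
      ring
    rw [heq]
    refine (abs_sub _ _).trans ?_
    rw [abs_div, abs_of_pos hA,
      abs_of_nonneg (mul_nonneg (hb k) (div_nonneg (by linarith) hABpos.le))]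
  have step2 : ∑ k, |a k / A - b k / B| ≤ (∑ k, |a k - b k|) / A + (A - B) / A := by
    calc ∑ k, |a k / A - b k / B|
        ≤ ∑ k, (|a k - b k| / A + b k * ((A - B) / (A * B))) :=
          Finset.sum_le_sum fun k _ => step1 k
      _ = (∑ k, |a k - b k|) / A + B * ((A - B) / (A * B)) := by
          rw [Finset.sum_add_distrib, ← Finset.sum_div, ← Finset.sum_mul]
      _ = (∑ k, |a k - b k|) / A + (A - B) / A := by
          rw [mul_div_assoc']
          congr 1
          field_simp
  have hdiff : A - B ≤ ∑ k, |a k - b k| := by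
    have : A - B = ∑ k, (a k - b k) := by rw [Finset.sum_sub_distrib]
    rw [this]
    exact le_trans (le_abs_self _) (Finset.abs_sum_le_sum_abs _ _)
  refine step2.trans ?_
  rw [two_mul, add_div]
  exact add_le_add le_rfl (by gcongr)

/-- ℓ¹ stability of normalization: for nonnegative `a, b : Fin T → ℝ`
with positive total masses `A = ∑_k a k` and `B = ∑_k b k`,
`∑_k |a k / A − b k / B| ≤ 2 · (∑_k |a k − b k|) / max A B`. -/
theorem normalization_l1_stability
    {T : ℕ} (hT : 1 ≤ T)
    (a b : Fin T → ℝ) (ha : ∀ k, 0 ≤ a k) (hb : ∀ k, 0 ≤ b k)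
    (hA : 0 < ∑ k, a k) (hB : 0 < ∑ k, b k) :
    ∑ k, |a k / (∑ j, a j) - b k / (∑ j, b j)| ≤
      2 * (∑ k, |a k - b k|) / max (∑ k, a k) (∑ k, b k) := by
  rcases le_total (∑ k, b k) (∑ k, a k) with h | h
  · rw [max_eq_left h]
    exact norm_l1_aux a b hb hA hB h
  · rw [max_eq_right h]
    calc ∑ k, |a k / (∑ j, a j) - b k / (∑ j, b j)|
        = ∑ k, |b k / (∑ j, b j) - a k / (∑ j, a j)| := by
          simp_rw [abs_sub_comm]
      _ ≤ 2 * (∑ k, |b k - a k|) / (∑ k, b k) := norm_l1_aux b a ha hB hA h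
      _ = 2 * (∑ k, |a k - b k|) / (∑ k, b k) := by simp_rw [abs_sub_comm]
end

section
/- Spectral entropy stability under small perturbations (precise form of the paper's SE-stability proposition): let x ∈ ℝ^T be nonzero, let ε > 0, and let d ∈ ℝ^T satisfy ‖d‖ ≤ ε‖x‖ in Euclidean norm. Let δ ∈ (0, e⁻¹] and assume the normalized powers satisfy p_k(x) ≥ δ and p_k(x + d) ≥ δ for every k. Then |SE(x + d) − SE(x)| ≤ 2·ε·(2 + ε)·log(1/δ). -/
open scoped RealInnerProductSpace BigOperators

/-- Normalized power spectrum `p_k(x) = P_k(x) / ∑_j P_j(x)` with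
`P_k(x) = ⟪u k, x⟫²` for an orthonormal basis `u` of `ℝ^T`. -/
noncomputable def normPower {T : ℕ}
    (u : OrthonormalBasis (Fin T) ℝ (EuclideanSpace ℝ (Fin T)))
    (x : EuclideanSpace ℝ (Fin T)) (k : Fin T) : ℝ :=
  ⟪u k, x⟫ ^ 2 / ∑ j : Fin T, ⟪u j, x⟫ ^ 2

/-- Spectral entropy `SE(x) = −∑_k p_k(x) · log p_k(x)`; the convention
`0 · log 0 = 0` holds automatically since `Real.log 0 = 0`. -/
noncomputable def spectralEntropy {T : ℕ}
    (u : OrthonormalBasis (Fin T) ℝ (EuclideanSpace ℝ (Fin T)))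
    (x : EuclideanSpace ℝ (Fin T)) : ℝ :=
  -∑ k : Fin T, normPower u x k * Real.log (normPower u x k)

/-- Lipschitz bound for `t ↦ t * log t` on `[δ, 1]`. -/
lemma mul_log_lipschitz_on {δ s t : ℝ} (hδ0 : 0 < δ) (hδe : δ ≤ (Real.exp 1)⁻¹)
    (hs : s ∈ Set.Icc δ 1) (ht : t ∈ Set.Icc δ 1) :
    |t * Real.log t - s * Real.log s| ≤ Real.log (1 / δ) * |t - s| := by
  have hlogδ : Real.log δ ≤ -1 := by
    have : Real.log δ ≤ Real.log (Real.exp 1)⁻¹ := Real.log_le_log hδ0 hδe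
    simpa [Real.log_inv, Real.log_exp] using this
  have hlog1δ : Real.log (1 / δ) = -Real.log δ := by
    rw [one_div, Real.log_inv]
  have key := Convex.norm_image_sub_le_of_norm_hasDerivWithin_le
    (f := fun y => y * Real.log y) (f' := fun y => Real.log y + 1)
    (s := Set.Icc δ 1) (C := Real.log (1 / δ))
    (fun y hy => (Real.hasDerivAt_mul_log (ne_of_gt (lt_of_lt_of_le hδ0 hy.1))).hasDerivWithinAt)
    (fun y hy => by
      have h1 : Real.log δ ≤ Real.log y := Real.log_le_log hδ0 hy.1
      have h2 : Real.log y ≤ 0 := Real.log_nonpos (le_trans hδ0.le hy.1) hy.2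
      show ‖Real.log y + 1‖ ≤ Real.log (1 / δ)
      rw [Real.norm_eq_abs, hlog1δ, abs_le]
      exact ⟨by linarith, by linarith⟩)
    (convex_Icc δ 1) hs ht
  simpa [Real.norm_eq_abs] using key

/-- Spectral entropy stability under small perturbations: for
nonzero `x ∈ ℝ^T`, `ε > 0`, and `d` with `‖d‖ ≤ ε‖x‖` (Euclidean norm), if
`δ ∈ (0, e⁻¹]` and the normalized powers satisfy `p_k(x) ≥ δ` and
`p_k(x + d) ≥ δ` for every `k`, then
`|SE(x + d) − SE(x)| ≤ 2·ε·(2 + ε)·log(1/δ)`. -/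
theorem spectral_entropy_stability
    {T : ℕ} (hT : 1 ≤ T)
    (u : OrthonormalBasis (Fin T) ℝ (EuclideanSpace ℝ (Fin T)))
    (x : EuclideanSpace ℝ (Fin T)) (hx : x ≠ 0)
    (ε : ℝ) (hε : 0 < ε)
    (d : EuclideanSpace ℝ (Fin T)) (hd : ‖d‖ ≤ ε * ‖x‖)
    (δ : ℝ) (hδ0 : 0 < δ) (hδe : δ ≤ (Real.exp 1)⁻¹)
    (hpx : ∀ k, δ ≤ normPower u x k)
    (hpxd : ∀ k, δ ≤ normPower u (x + d) k) :
    |spectralEntropy u (x + d) - spectralEntropy u x| ≤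
      2 * ε * (2 + ε) * Real.log (1 / δ) := by
  have hxpos : (0:ℝ) < ‖x‖ := norm_pos_iff.mpr hx
  -- Parseval
  have parseval : ∀ v : EuclideanSpace ℝ (Fin T), ∑ k : Fin T, ⟪u k, v⟫ ^ 2 = ‖v‖ ^ 2 := by
    intro v
    have h := u.sum_inner_mul_inner v v
    rw [real_inner_self_eq_norm_sq] at h
    rw [← h]
    refine Finset.sum_congr rfl fun k _ => ?_
    rw [sq, real_inner_comm]
  -- x + d ≠ 0
  have hxd : x + d ≠ 0 := by
    intro h0
    have k0 : Fin T := ⟨0, hT⟩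
    have h1 := hpxd k0
    rw [normPower, h0] at h1
    simp at h1
    linarith
  have hxdpos : (0:ℝ) < ‖x + d‖ := norm_pos_iff.mpr hxd
  set v := ‖x‖⁻¹ • x with hv
  set w := ‖x + d‖⁻¹ • (x + d) with hw
  have hnv : ‖v‖ = 1 := by
    rw [hv, norm_smul, norm_inv, norm_norm, inv_mul_cancel₀ hxpos.ne']
  have hnw : ‖w‖ = 1 := by
    rw [hw, norm_smul, norm_inv, norm_norm, inv_mul_cancel₀ hxdpos.ne']
  -- normPower in terms of v, w
  have hp : ∀ k, normPower u x k = ⟪u k, v⟫ ^ 2 := by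
    intro k
    rw [normPower, parseval, hv, real_inner_smul_right, mul_pow, inv_pow,
      div_eq_mul_inv, mul_comm]
  have hq : ∀ k, normPower u (x + d) k = ⟪u k, w⟫ ^ 2 := by
    intro k
    rw [normPower, parseval, hw, real_inner_smul_right, mul_pow, inv_pow,
      div_eq_mul_inv, mul_comm]
  -- upper bound 1
  have hone : ∀ (z : EuclideanSpace ℝ (Fin T)) (k : Fin T), ‖z‖ = 1 → ⟪u k, z⟫ ^ 2 ≤ 1 := by
    intro z k hz
    have h2 : |⟪u k, z⟫| ≤ 1 := by
      calc |⟪u k, z⟫| ≤ ‖u k‖ * ‖z‖ := abs_real_inner_le_norm _ _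
      _ = 1 := by rw [hz, u.orthonormal.1 k]; ring
    calc ⟪u k, z⟫ ^ 2 = |⟪u k, z⟫| ^ 2 := (sq_abs _).symm
    _ ≤ 1 ^ 2 := pow_le_pow_left₀ (abs_nonneg _) h2 2
    _ = 1 := one_pow 2
  -- ‖w - v‖ ≤ 2 * ε
  have hwv : ‖w - v‖ ≤ 2 * ε := by
    have hsplit : w - v = (‖x + d‖⁻¹ - ‖x‖⁻¹) • (x + d) + ‖x‖⁻¹ • d := by
      rw [hw, hv]; module
    have h1 : ‖(‖x + d‖⁻¹ - ‖x‖⁻¹) • (x + d)‖ ≤ ε := by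
      rw [norm_smul, Real.norm_eq_abs]
      have heq : |‖x + d‖⁻¹ - ‖x‖⁻¹| * ‖x + d‖ = |‖x‖ - ‖x + d‖| / ‖x‖ := by
        rw [show ‖x + d‖⁻¹ - ‖x‖⁻¹ = (‖x‖ - ‖x + d‖) / (‖x‖ * ‖x + d‖) by
          field_simp]
        rw [abs_div, abs_of_pos (mul_pos hxpos hxdpos)]
        field_simp
      rw [heq, div_le_iff₀ hxpos]
      calc |‖x‖ - ‖x + d‖| ≤ ‖x - (x + d)‖ := abs_norm_sub_norm_le _ _
      _ = ‖d‖ := by rw [show x - (x + d) = -d by abel, norm_neg]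
      _ ≤ ε * ‖x‖ := hd
    have h2 : ‖(‖x‖⁻¹ : ℝ) • d‖ ≤ ε := by
      rw [norm_smul, Real.norm_eq_abs, abs_of_pos (inv_pos.mpr hxpos),
        inv_mul_le_iff₀ hxpos]
      linarith
    calc ‖w - v‖ ≤ ‖(‖x + d‖⁻¹ - ‖x‖⁻¹) • (x + d)‖ + ‖(‖x‖⁻¹ : ℝ) • d‖ := by
          rw [hsplit]; exact norm_add_le _ _
    _ ≤ ε + ε := add_le_add h1 h2
    _ = 2 * ε := by ring
  -- L1 bound on normalized powers
  have hL1 : ∑ k : Fin T, |normPower u (x + d) k - normPower u x k| ≤ 2 * ε * 2 := by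
    have hstep : ∀ k : Fin T, |normPower u (x + d) k - normPower u x k| =
        |⟪u k, w - v⟫| * |⟪u k, w + v⟫| := by
      intro k
      rw [hp, hq, sq_sub_sq, inner_add_right, inner_sub_right, abs_mul]
      ring
    rw [Finset.sum_congr rfl (fun k _ => hstep k)]
    have hcs := Finset.sum_mul_sq_le_sq_mul_sq Finset.univ
      (fun k : Fin T => |⟪u k, w - v⟫|) (fun k : Fin T => |⟪u k, w + v⟫|)
    have hA : ∑ k : Fin T, |⟪u k, w - v⟫| ^ 2 = ‖w - v‖ ^ 2 := by
      rw [← parseval (w - v)]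
      exact Finset.sum_congr rfl fun k _ => sq_abs _
    have hB : ∑ k : Fin T, |⟪u k, w + v⟫| ^ 2 = ‖w + v‖ ^ 2 := by
      rw [← parseval (w + v)]
      exact Finset.sum_congr rfl fun k _ => sq_abs _
    rw [hA, hB] at hcs
    have hsum_nonneg : (0:ℝ) ≤ ∑ k : Fin T, |⟪u k, w - v⟫| * |⟪u k, w + v⟫| :=
      Finset.sum_nonneg fun k _ => mul_nonneg (abs_nonneg _) (abs_nonneg _)
    have hBnn : (0:ℝ) ≤ ‖w - v‖ * ‖w + v‖ := mul_nonneg (norm_nonneg _) (norm_nonneg _)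
    have hprod : ∑ k : Fin T, |⟪u k, w - v⟫| * |⟪u k, w + v⟫| ≤ ‖w - v‖ * ‖w + v‖ := by
      have h1 : (∑ k : Fin T, |⟪u k, w - v⟫| * |⟪u k, w + v⟫|) ^ 2
          ≤ (‖w - v‖ * ‖w + v‖) ^ 2 := by
        calc (∑ k : Fin T, |⟪u k, w - v⟫| * |⟪u k, w + v⟫|) ^ 2
            ≤ ‖w - v‖ ^ 2 * ‖w + v‖ ^ 2 := hcs
        _ = (‖w - v‖ * ‖w + v‖) ^ 2 := by ring
      exact (pow_le_pow_iff_left₀ hsum_nonneg hBnn two_ne_zero).mp h1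
    have hwvsum : ‖w + v‖ ≤ 2 := by
      calc ‖w + v‖ ≤ ‖w‖ + ‖v‖ := norm_add_le _ _
      _ = 2 := by rw [hnv, hnw]; ring
    calc ∑ k : Fin T, |⟪u k, w - v⟫| * |⟪u k, w + v⟫| ≤ ‖w - v‖ * ‖w + v‖ := hprod
    _ ≤ (2 * ε) * 2 := mul_le_mul hwv hwvsum (norm_nonneg _) (by linarith)
  -- log bound
  have hlog1 : (1:ℝ) ≤ Real.log (1 / δ) := by
    have h1 : Real.exp 1 ≤ 1 / δ := by
      rw [le_div_iff₀ hδ0]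
      calc Real.exp 1 * δ ≤ Real.exp 1 * (Real.exp 1)⁻¹ :=
        mul_le_mul_of_nonneg_left hδe (Real.exp_pos 1).le
      _ = 1 := mul_inv_cancel₀ (Real.exp_pos 1).ne'
    calc (1:ℝ) = Real.log (Real.exp 1) := (Real.log_exp 1).symm
    _ ≤ Real.log (1 / δ) := Real.log_le_log (Real.exp_pos 1) h1
  have hlognn : (0:ℝ) ≤ Real.log (1 / δ) := by linarith
  -- assemble
  have hmain : spectralEntropy u (x + d) - spectralEntropy u x =
      ∑ k : Fin T, (normPower u x k * Real.log (normPower u x k)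
        - normPower u (x + d) k * Real.log (normPower u (x + d) k)) := by
    rw [spectralEntropy, spectralEntropy, Finset.sum_sub_distrib]
    ring
  rw [hmain]
  calc |∑ k : Fin T, (normPower u x k * Real.log (normPower u x k)
        - normPower u (x + d) k * Real.log (normPower u (x + d) k))|
      ≤ ∑ k : Fin T, |normPower u x k * Real.log (normPower u x k)
        - normPower u (x + d) k * Real.log (normPower u (x + d) k)| :=
        Finset.abs_sum_le_sum_abs _ _
    _ ≤ ∑ k : Fin T, Real.log (1 / δ) * |normPower u (x + d) k - normPower u x k| := by
        refine Finset.sum_le_sum fun k _ => ?_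
        rw [abs_sub_comm]
        refine mul_log_lipschitz_on hδ0 hδe ⟨hpx k, ?_⟩ ⟨hpxd k, ?_⟩
        · rw [hp]; exact hone v k hnv
        · rw [hq]; exact hone w k hnw
    _ = Real.log (1 / δ) * ∑ k : Fin T, |normPower u (x + d) k - normPower u x k| :=
        (Finset.mul_sum _ _ _).symm
    _ ≤ Real.log (1 / δ) * (2 * ε * 2) := mul_le_mul_of_nonneg_left hL1 hlognn
    _ ≤ 2 * ε * (2 + ε) * Real.log (1 / δ) := by nlinarith [mul_nonneg (mul_nonneg hε.le hε.le) hlognn]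
end
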